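/- An algebra A is exactly correctable for a channel N with Kraus operators {E_i} (i.e., there exists a channel R with (R∘N)†(a) = a for all a ∈ A) if and only if every a ∈ A commutes with E_i† E_j for all i, j; equivalently, A is contained in the commutant of the algebra generated by {E_i† E_j}. -/

import Mathlib

open Matrix Kronecker MeasureTheory
open scoped ComplexOrder

noncomputable section

/-- Square complex matrices of size `n`. -/
abbrev Mat (n : ℕ) := Matrix (Fin n) (Fin n) ℂ

/-- Operator norm (spectral norm) of a square matrix. -/
noncomputable def opNorm {m : Type*} [Fintype m] [DecidableEq m]
    (A : Matrix m m ℂ) : ℝ :=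
  ‖Matrix.toEuclideanCLM (𝕜 := ℂ) A‖

/-- Trace norm of a square matrix. -/
noncomputable def traceNorm {m : Type*} [Fintype m] [DecidableEq m]
    (A : Matrix m m ℂ) : ℝ :=
  (((Matrix.posSemidef_conjTranspose_mul_self A).1.eigenvectorUnitary : Matrix m m ℂ) *
    diagonal (((↑) : ℝ → ℂ) ∘ (√·) ∘ (Matrix.posSemidef_conjTranspose_mul_self A).1.eigenvalues) *
    (star (Matrix.posSemidef_conjTranspose_mul_self A).1.eigenvectorUnitary : Matrix m m ℂ)).trace.re

/-- Trivial extension `Φ ⊗ id` of a map on matrices, defined entrywise. -/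
def extendId {a b : ℕ} (Φ : Mat a → Mat b) (m : ℕ)
    (M : Matrix (Fin a × Fin m) (Fin a × Fin m) ℂ) :
    Matrix (Fin b × Fin m) (Fin b × Fin m) ℂ :=
  Matrix.of fun r c => Φ (Matrix.of fun p q => M (p, r.2) (q, c.2)) r.1 c.1

/-- Diamond norm of a (difference of) map(s) `Mat a → Mat b`, with ancilla of
dimension equal to the input dimension. -/
noncomputable def dnorm {a b : ℕ} (Φ : Mat a → Mat b) : ℝ :=
  ⨆ ρ : {ρ : Matrix (Fin a × Fin a) (Fin a × Fin a) ℂ // ρ.PosSemidef ∧ ρ.trace = 1},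
    traceNorm (extendId Φ a ρ.1)

/-- A map is a quantum channel (CPTP) iff it admits a Kraus representation. -/
def IsCPTP {a b : ℕ} (Φ : Mat a → Mat b) : Prop :=
  ∃ (κ : ℕ) (K : Fin κ → Matrix (Fin b) (Fin a) ℂ),
    (∀ ρ, Φ ρ = ∑ i, K i * ρ * (K i)ᴴ) ∧ (∑ i, (K i)ᴴ * K i = 1)

/-- `Nh` is a complementary channel of `N` (with environment of dimension `e`). -/
def IsComplementary {a b e : ℕ} (N : Mat a → Mat b) (Nh : Mat a → Mat e) : Prop :=
  ∃ K : Fin e → Matrix (Fin b) (Fin a) ℂ,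
    (∀ ρ, N ρ = ∑ i, K i * ρ * (K i)ᴴ) ∧ (∑ i, (K i)ᴴ * K i = 1) ∧
    (∀ ρ, Nh ρ = Matrix.of fun i j => (K i * ρ * (K j)ᴴ).trace)

/-- The commutant of a set of matrices. -/
def commutant {n : ℕ} (A : Set (Mat n)) : Set (Mat n) :=
  {X | ∀ a ∈ A, a * X = X * a}

/-- `P` is the Hilbert–Schmidt-orthogonal projection onto the set `S`. -/
def IsHSProjectionOnto {n : ℕ} (P : Mat n → Mat n) (S : Set (Mat n)) : Prop :=
  (∀ X, P X ∈ S) ∧ (∀ X ∈ S, P X = X) ∧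
  (∀ X Y, ((P X)ᴴ * Y).trace = (Xᴴ * P Y).trace)

end

private lemma trace_cyc {n : ℕ} (X ρ W : Mat n) :
    (X * ρ * W).trace = (ρ * (W * X)).trace := by
  rw [Matrix.trace_mul_comm, ← mul_assoc, Matrix.trace_mul_comm]

private lemma sum_mul_conjTranspose_eq_zero {n : ℕ} {ι : Type*} [Fintype ι]
    (M : ι → Mat n) (h : ∑ m, M m * (M m)ᴴ = 0) (m : ι) : M m = 0 := by
  have key : ∀ m' : ι, (M m' * (M m')ᴴ).trace
      = ((∑ p, ∑ q, Complex.normSq (M m' p q) : ℝ) : ℂ) := by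
    intro m'
    simp only [Matrix.trace, Matrix.diag, Matrix.mul_apply, Matrix.conjTranspose_apply]
    push_cast
    refine Finset.sum_congr rfl fun p _ => Finset.sum_congr rfl fun q _ => ?_
    rw [Complex.star_def, Complex.mul_conj]
  have h1 : (∑ m', (∑ p, ∑ q, Complex.normSq (M m' p q) : ℝ)) = 0 := by
    have := congrArg Matrix.trace h
    rw [Matrix.trace_sum, Matrix.trace_zero] at this
    simp only [key] at this
    exact_mod_cast this
  have h2 : ∀ m' ∈ Finset.univ, (0:ℝ) ≤ ∑ p, ∑ q, Complex.normSq (M m' p q) :=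
    fun m' _ => Finset.sum_nonneg fun p _ => Finset.sum_nonneg fun q _ => Complex.normSq_nonneg _
  have h3 := (Finset.sum_eq_zero_iff_of_nonneg h2).mp h1 m (Finset.mem_univ m)
  ext p q
  have hp := (Finset.sum_eq_zero_iff_of_nonneg
    (fun p _ => Finset.sum_nonneg fun q _ => Complex.normSq_nonneg _)).mp h3 p (Finset.mem_univ p)
  have hq := (Finset.sum_eq_zero_iff_of_nonneg
    (fun q _ => Complex.normSq_nonneg _)).mp hp q (Finset.mem_univ q)
  simpa using Complex.normSq_eq_zero.mp hq

private lemma eq_of_forall_trace_mul_eq {n : ℕ} {X Y : Mat n}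
    (h : ∀ ρ : Mat n, (ρ * X).trace = (ρ * Y).trace) : X = Y := by
  ext p q
  have := h (Matrix.single q p 1)
  simpa [Matrix.trace, Matrix.diag, Matrix.mul_apply, Matrix.single, Finset.sum_ite_eq,
    Matrix.of_apply, ite_and] using this

private lemma exists_inv_sqrt {n : ℕ} {Q : Mat n} (hQ : Q.PosSemidef) :
    ∃ G P : Mat n, Gᴴ = G ∧ Pᴴ = P ∧ P * P = P ∧ G * G * Q = P ∧ P * Q = Q ∧
      (∀ X : Mat n, X * Q = Q * X → X * G = G * X) := by
  classical
  have hH : Q.IsHermitian := hQ.1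
  set V : Mat n := (hH.eigenvectorUnitary : Mat n) with hVdef
  have hV1 : star V * V = 1 := Matrix.mem_unitaryGroup_iff'.mp hH.eigenvectorUnitary.2
  have hV2 : V * star V = 1 := Matrix.mem_unitaryGroup_iff.mp hH.eigenvectorUnitary.2
  have cancelL : ∀ Z : Mat n, star V * (V * Z) = Z := fun Z => by
    rw [← mul_assoc, hV1, one_mul]
  have cancelL' : ∀ Z : Mat n, V * (star V * Z) = Z := fun Z => by
    rw [← mul_assoc, hV2, one_mul]
  set e : Fin n → ℝ := hH.eigenvalues with hedef
  have hspec : Q = V * Matrix.diagonal (fun i => (e i : ℂ)) * star V := by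
    exact hH.spectral_theorem
  set g : Fin n → ℂ := fun i => ((if e i = 0 then 0 else (Real.sqrt (e i))⁻¹ : ℝ) : ℂ) with hgdef
  set p : Fin n → ℂ := fun i => if e i = 0 then 0 else 1 with hpdef
  have Dmul' : ∀ A B : Mat n, (V * A * star V) * (V * B * star V) = V * (A * B) * star V := by
    intro A B
    simp only [mul_assoc]
    rw [cancelL]
  have Dmul : ∀ f f' : Fin n → ℂ,
      (V * Matrix.diagonal f * star V) * (V * Matrix.diagonal f' * star V)
        = V * Matrix.diagonal (fun i => f i * f' i) * star V := by
    intro f f'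
    rw [Dmul', Matrix.diagonal_mul_diagonal]

  have Dstar : ∀ f : Fin n → ℂ,
      (V * Matrix.diagonal f * star V)ᴴ = V * Matrix.diagonal (star f) * star V := by
    intro f
    rw [Matrix.conjTranspose_mul, Matrix.conjTranspose_mul, Matrix.diagonal_conjTranspose,
      ← Matrix.star_eq_conjTranspose V, ← Matrix.star_eq_conjTranspose (star V), star_star,
      ← mul_assoc]
  refine ⟨V * Matrix.diagonal g * star V, V * Matrix.diagonal p * star V, ?_, ?_, ?_, ?_, ?_, ?_⟩
  · rw [Dstar]
    have : star g = g := by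
      funext i
      simp [hgdef, Complex.star_def, Complex.conj_ofReal]
    rw [this]
  · rw [Dstar]
    have : star p = p := by
      funext i
      by_cases h : e i = 0 <;> simp [hpdef, h]
    rw [this]
  · rw [Dmul]
    have : (fun i => p i * p i) = p := by
      funext i
      by_cases h : e i = 0 <;> simp [hpdef, h]
    rw [this]
  · rw [hspec, Dmul, Dmul]
    have : (fun i => g i * g i * (e i : ℂ)) = p := by
      funext i
      by_cases h : e i = 0
      · simp [hgdef, hpdef, h]
      · have hnn : 0 ≤ e i := hQ.eigenvalues_nonneg i
        have hs : Real.sqrt (e i) * Real.sqrt (e i) = e i := Real.mul_self_sqrt hnn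
        have hr : (Real.sqrt (e i))⁻¹ * (Real.sqrt (e i))⁻¹ * (e i) = 1 := by
          rw [← mul_inv, hs, inv_mul_cancel₀ h]
        simp only [hgdef, hpdef, if_neg h]
        exact_mod_cast congrArg (Complex.ofReal) hr
    rw [this]
  · rw [hspec, Dmul]
    have : (fun i => p i * (e i : ℂ)) = (fun i => (e i : ℂ)) := by
      funext i
      by_cases h : e i = 0 <;> simp [hpdef, h]
    rw [this]
  · intro X hcomm
    set Y : Mat n := star V * X * V with hYdef
    have hX : V * Y * star V = X := by
      rw [hYdef]
      simp only [mul_assoc]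
      rw [hV2, mul_one, cancelL']
    have hY : Y * Matrix.diagonal (fun i => (e i : ℂ))
        = Matrix.diagonal (fun i => (e i : ℂ)) * Y := by
      have h2 := congrArg (fun M => star V * M * V) hcomm
      simp only [hspec] at h2
      simp only [mul_assoc] at h2
      rw [hV1, mul_one] at h2
      rw [cancelL] at h2
      rw [hYdef]
      simp only [mul_assoc]
      exact h2
    have hent : ∀ a b, Y a b * (e b : ℂ) = (e a : ℂ) * Y a b := by
      intro a b
      have h3 : (Y * Matrix.diagonal (fun i => (e i : ℂ))) a b
          = (Matrix.diagonal (fun i => (e i : ℂ)) * Y) a b := by rw [hY]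
      rwa [Matrix.mul_diagonal, Matrix.diagonal_mul] at h3
    have hYg : Y * Matrix.diagonal g = Matrix.diagonal g * Y := by
      ext a b
      rw [Matrix.mul_diagonal, Matrix.diagonal_mul]
      rcases eq_or_ne (Y a b) 0 with h0 | h0
      · simp [h0]
      · have heq : (e b : ℂ) = (e a : ℂ) := by
          have h4 := hent a b
          rw [mul_comm ((e a : ℂ)) (Y a b)] at h4
          exact mul_left_cancel₀ h0 h4
        have heq' : e b = e a := by exact_mod_cast heq
        have hg : g b = g a := by simp only [hgdef, heq']
        rw [hg, mul_comm]
    calc X * (V * Matrix.diagonal g * star V)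
        = (V * Y * star V) * (V * Matrix.diagonal g * star V) := by rw [hX]
      _ = V * (Y * Matrix.diagonal g) * star V := Dmul' _ _
      _ = V * (Matrix.diagonal g * Y) * star V := by rw [hYg]
      _ = (V * Matrix.diagonal g * star V) * (V * Y * star V) := (Dmul' _ _).symm
      _ = (V * Matrix.diagonal g * star V) * X := by rw [hX]

set_option maxHeartbeats 1000000 in
/-- exact correctability of an algebra iff commutation with all
`E_i† E_j`; equivalently containment in the commutant they generate. -/
theorem stmt_7 {d k : ℕ} (E : Fin k → Mat d) (hE : ∑ i, (E i)ᴴ * E i = 1)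
    (N : Mat d → Mat d) (hN : ∀ ρ, N ρ = ∑ i, E i * ρ * (E i)ᴴ)
    (A : StarSubalgebra ℂ (Mat d)) :
    ((∃ R : Mat d → Mat d, IsCPTP R ∧
        ∀ a ∈ A, ∀ ρ : Mat d, (R (N ρ) * a).trace = (ρ * a).trace) ↔
      (∀ a ∈ A, ∀ i j, a * ((E i)ᴴ * E j) = ((E i)ᴴ * E j) * a)) ∧
    ((∀ a ∈ A, ∀ i j, a * ((E i)ᴴ * E j) = ((E i)ᴴ * E j) * a) ↔
      (A : Set (Mat d)) ⊆ commutant {X | ∃ i j, X = (E i)ᴴ * E j}):= by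
  constructor
  · constructor
    · rintro ⟨R, ⟨κ, K, hRrep, hK⟩, hR⟩
      have key : ∀ b ρ : Mat d, (R (N ρ) * b).trace
          = (ρ * ∑ l, ∑ i, ((E i)ᴴ * (K l)ᴴ * b) * (K l * E i)).trace := by
        intro b ρ
        rw [hRrep, hN]
        simp only [Finset.sum_mul, Finset.mul_sum, Matrix.trace_sum]
        refine Finset.sum_congr rfl fun l _ => Finset.sum_congr rfl fun i _ => ?_
        rw [show K l * (E i * ρ * (E i)ᴴ) * (K l)ᴴ * b
            = (K l * E i) * ρ * ((E i)ᴴ * ((K l)ᴴ * b)) by simp only [mul_assoc]]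
        rw [trace_cyc]
        congr 1
        simp only [mul_assoc]
      have hfix : ∀ b ∈ A, ∑ l, ∑ i, ((E i)ᴴ * (K l)ᴴ * b) * (K l * E i) = b := by
        intro b hb
        refine eq_of_forall_trace_mul_eq fun ρ => ?_
        rw [← key b ρ, hR b hb ρ]
      have hcomm : ∀ b ∈ A, ∀ (l : Fin κ) (i : Fin k),
          (E i)ᴴ * (K l)ᴴ * b = b * ((E i)ᴴ * (K l)ᴴ) := by
        intro b hb l i
        have hbstar : bᴴ ∈ A := by
          have := star_mem hb
          rwa [Matrix.star_eq_conjTranspose] at this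
        set C : Fin κ × Fin k → Mat d :=
          fun m => (E m.2)ᴴ * (K m.1)ᴴ * b - b * ((E m.2)ᴴ * (K m.1)ᴴ) with hCdef
        have expand : ∀ m : Fin κ × Fin k, C m * (C m)ᴴ =
            ((E m.2)ᴴ * (K m.1)ᴴ * (b * bᴴ)) * (K m.1 * E m.2)
            - ((E m.2)ᴴ * (K m.1)ᴴ * b) * (K m.1 * E m.2) * bᴴ
            - b * (((E m.2)ᴴ * (K m.1)ᴴ * bᴴ) * (K m.1 * E m.2))
            + b * ((((E m.2)ᴴ * (K m.1)ᴴ * 1) * (K m.1 * E m.2)) * bᴴ) := by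
          intro m
          simp only [hCdef, Matrix.conjTranspose_sub, Matrix.conjTranspose_mul,
            Matrix.conjTranspose_conjTranspose]
          noncomm_ring
        have hCsum : ∑ m : Fin κ × Fin k, C m * (C m)ᴴ = 0 := by
          rw [Finset.sum_congr rfl fun m _ => expand m]
          simp only [Finset.sum_sub_distrib, Finset.sum_add_distrib, ← Finset.sum_mul,
            ← Finset.mul_sum]
          rw [Fintype.sum_prod_type, Fintype.sum_prod_type, Fintype.sum_prod_type,
            Fintype.sum_prod_type]
          rw [hfix (b * bᴴ) (mul_mem hb hbstar), hfix b hb, hfix bᴴ hbstar]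
          have h1 : ∑ l, ∑ i, ((E i)ᴴ * (K l)ᴴ * 1) * (K l * E i) = 1 := hfix 1 (one_mem A)
          rw [h1]
          simp
        have := sum_mul_conjTranspose_eq_zero C hCsum (l, i)
        rw [hCdef] at this
        exact sub_eq_zero.mp this
      intro a ha i j
      have h1 : ∀ l, a * ((E i)ᴴ * (K l)ᴴ) = (E i)ᴴ * (K l)ᴴ * a := fun l => (hcomm a ha l i).symm
      have h2 : ∀ l, K l * E j * a = a * (K l * E j) := by
        intro l
        have hstar : aᴴ ∈ A := by
          have := star_mem ha
          rwa [Matrix.star_eq_conjTranspose] at this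
        have h3 := hcomm aᴴ hstar l j
        have h4 := congrArg Matrix.conjTranspose h3
        simpa [Matrix.conjTranspose_mul, Matrix.conjTranspose_conjTranspose, mul_assoc] using h4.symm
      calc a * ((E i)ᴴ * E j)
          = a * ((E i)ᴴ * ((∑ l, (K l)ᴴ * K l) * E j)) := by rw [hK, one_mul]
        _ = ∑ l, a * ((E i)ᴴ * (K l)ᴴ) * (K l * E j) := by
            simp only [Finset.sum_mul, Finset.mul_sum, mul_assoc]
        _ = ∑ l, (E i)ᴴ * (K l)ᴴ * a * (K l * E j) := by
            exact Finset.sum_congr rfl fun l _ => by rw [h1 l]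
        _ = ∑ l, (E i)ᴴ * (K l)ᴴ * (K l * E j) * a := by
            refine Finset.sum_congr rfl fun l _ => ?_
            rw [mul_assoc ((E i)ᴴ * (K l)ᴴ) a (K l * E j), ← h2 l]
            simp only [mul_assoc]
        _ = ((E i)ᴴ * ((∑ l, (K l)ᴴ * K l) * E j)) * a := by
            simp only [Finset.sum_mul, Finset.mul_sum, mul_assoc]
        _ = ((E i)ᴴ * E j) * a := by rw [hK, one_mul]
    · intro hB
      classical
      set Q : Mat d := ∑ i, E i * (E i)ᴴ with hQdef
      have hQ : Q.PosSemidef := by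
        rw [hQdef]
        refine Finset.sum_induction _ _ (fun X Y hX hY => hX.add hY) ?_
          (fun i _ => Matrix.posSemidef_self_mul_conjTranspose (E i))
        exact Matrix.PosSemidef.zero
      obtain ⟨G, P, hGh, hPh, hPP, hGGQ, hPQ, hGcomm⟩ := exists_inv_sqrt hQ
      have hQG : Q * G = G * Q := hGcomm Q rfl
      have hPE : ∀ i, P * E i = E i := by
        have hz : ∑ i, ((1 - P) * E i) * (((1 - P) * E i))ᴴ = 0 := by
          have h1 : ∑ i, ((1 - P) * E i) * (((1 - P) * E i))ᴴ = (1 - P) * Q * (1 - P)ᴴ := by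
            rw [hQdef]
            simp only [Matrix.conjTranspose_mul, Finset.mul_sum, Finset.sum_mul, mul_assoc]
          rw [h1, sub_mul, one_mul, hPQ, sub_self, zero_mul]
        intro i
        have h2 := sum_mul_conjTranspose_eq_zero _ hz i
        have h3 : E i - P * E i = 0 := by
          rw [← h2, sub_mul, one_mul]
        exact (sub_eq_zero.mp h3).symm
      set K : Fin (k + 1) → Mat d := Fin.lastCases (1 - P) (fun i => (E i)ᴴ * G) with hKdef
      refine ⟨fun σ => ∑ m, K m * σ * (K m)ᴴ, ⟨k + 1, K, fun ρ => rfl, ?_⟩, ?_⟩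
      · rw [Fin.sum_univ_castSucc]
        simp only [hKdef, Fin.lastCases_castSucc, Fin.lastCases_last]
        have h1 : ∑ i : Fin k, ((E i)ᴴ * G)ᴴ * ((E i)ᴴ * G) = G * Q * G := by
          simp only [Matrix.conjTranspose_mul, Matrix.conjTranspose_conjTranspose, hGh, hQdef]
          simp only [Finset.mul_sum, Finset.sum_mul, mul_assoc]
        have h2 : G * Q * G = P := by
          rw [mul_assoc, hQG, ← mul_assoc, hGGQ]
        have h3 : (1 - P)ᴴ * (1 - P) = 1 - P := by
          rw [Matrix.conjTranspose_sub, Matrix.conjTranspose_one, hPh, sub_mul, one_mul, mul_sub,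
            mul_one, hPP, sub_self, sub_zero]
        rw [h1, h2, h3]
        abel
      · intro a ha ρ
        have hBa := hB a ha
        set Na : Mat d := ∑ i, E i * a * (E i)ᴴ with hNadef
        have hQN : Na * Q = Q * Na := by
          rw [hNadef, hQdef]
          simp only [Finset.sum_mul, Finset.mul_sum, mul_assoc]
          refine Finset.sum_congr rfl fun i _ => Finset.sum_congr rfl fun j _ => ?_
          rw [show E j * (a * ((E j)ᴴ * (E i * (E i)ᴴ)))
              = E j * ((a * ((E j)ᴴ * E i)) * (E i)ᴴ) from by simp only [mul_assoc], hBa j i]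
          simp only [mul_assoc]
        have hGN : Na * G = G * Na := hGcomm Na hQN
        have hQmul : ∀ Z : Mat d, ∑ i, E i * ((E i)ᴴ * Z) = Q * Z := by
          intro Z
          rw [hQdef]
          simp only [Finset.sum_mul, mul_assoc]
        have hQGG : ∀ j, Q * (G * (G * E j)) = E j := by
          intro j
          have hq : Q * G * G = P := by
            rw [hQG, mul_assoc, hQG, ← mul_assoc, hGGQ]
          calc Q * (G * (G * E j)) = (Q * G * G) * E j := by simp only [mul_assoc]
            _ = P * E j := by rw [hq]
            _ = E j := hPE j
        have h1P : (1 - P) * (∑ j, E j * ρ * (E j)ᴴ) = 0 := by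
          rw [Finset.mul_sum]
          refine Finset.sum_eq_zero fun j _ => ?_
          rw [← mul_assoc, ← mul_assoc, sub_mul, one_mul, hPE j, sub_self, zero_mul, zero_mul]
        rw [hN]
        show ((∑ m : Fin (k + 1), K m * (∑ i : Fin k, E i * ρ * (E i)ᴴ) * (K m)ᴴ) * a).trace
            = (ρ * a).trace
        rw [Fin.sum_univ_castSucc]
        simp only [hKdef, Fin.lastCases_castSucc, Fin.lastCases_last]
        rw [add_mul, Matrix.trace_add]
        rw [h1P, zero_mul, zero_mul, Matrix.trace_zero, add_zero]
        simp only [Matrix.conjTranspose_mul, Matrix.conjTranspose_conjTranspose, hGh]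
        rw [Finset.sum_mul, Matrix.trace_sum]
        have step1 : ∀ i : Fin k,
            ((E i)ᴴ * G * (∑ j, E j * ρ * (E j)ᴴ) * (G * E i)) * a
              = ((E i)ᴴ * G) * (∑ j, E j * ρ * (E j)ᴴ) * (G * E i * a) := by
          intro i; simp only [mul_assoc]
        calc ∑ i, (((E i)ᴴ * G * (∑ j, E j * ρ * (E j)ᴴ) * (G * E i)) * a).trace
            = ∑ i, ((∑ j, E j * ρ * (E j)ᴴ) * ((G * E i * a) * ((E i)ᴴ * G))).trace := by
              refine Finset.sum_congr rfl fun i _ => ?_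
              rw [step1 i, trace_cyc]
          _ = ((∑ j, E j * ρ * (E j)ᴴ) * ∑ i, (G * E i * a) * ((E i)ᴴ * G)).trace := by
              rw [← Matrix.trace_sum, ← Finset.mul_sum]
          _ = ((∑ j, E j * ρ * (E j)ᴴ) * (Na * (G * G))).trace := by
              have hsum2 : (∑ i, (G * E i * a) * ((E i)ᴴ * G)) = Na * (G * G) := by
                have e1 : (∑ i, (G * E i * a) * ((E i)ᴴ * G)) = G * Na * G := by
                  rw [hNadef]
                  simp only [Finset.mul_sum, Finset.sum_mul, mul_assoc]
                rw [e1, show G * Na * G = (Na * G) * G from by rw [hGN], mul_assoc]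
              rw [hsum2]
          _ = ∑ j, (ρ * (((E j)ᴴ * (Na * (G * G))) * E j)).trace := by
              rw [Finset.sum_mul, Matrix.trace_sum]
              refine Finset.sum_congr rfl fun j _ => ?_
              rw [show (E j * ρ * (E j)ᴴ) * (Na * (G * G))
                  = E j * ρ * ((E j)ᴴ * (Na * (G * G))) by simp only [mul_assoc], trace_cyc]
          _ = (ρ * ∑ j, ((E j)ᴴ * (Na * (G * G))) * E j).trace := by
              rw [← Matrix.trace_sum, ← Finset.mul_sum]
          _ = (ρ * a).trace := by
              congr 1
              congr 1
              calc ∑ j, ((E j)ᴴ * (Na * (G * G))) * E j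
                  = ∑ j, ∑ i, ((E j)ᴴ * E i * a) * ((E i)ᴴ * (G * (G * E j))) := by
                    rw [hNadef]
                    simp only [Finset.mul_sum, Finset.sum_mul, mul_assoc]
                _ = ∑ j, ∑ i, a * (((E j)ᴴ * E i) * ((E i)ᴴ * (G * (G * E j)))) := by
                    refine Finset.sum_congr rfl fun j _ => Finset.sum_congr rfl fun i _ => ?_
                    rw [← hBa j i]
                    simp only [mul_assoc]
                _ = ∑ j, a * ((E j)ᴴ * (Q * (G * (G * E j)))) := by
                    refine Finset.sum_congr rfl fun j _ => ?_
                    rw [← Finset.mul_sum, ← hQmul (G * (G * E j))]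
                    simp only [Finset.mul_sum, mul_assoc]
                _ = ∑ j, a * ((E j)ᴴ * E j) := by
                    refine Finset.sum_congr rfl fun j _ => ?_
                    rw [hQGG j]
                _ = a := by
                    rw [← Finset.mul_sum, hE, mul_one]
  · constructor
    · intro h a ha X hX
      obtain ⟨i, j, rfl⟩ := hX
      exact (h a ha i j).symm
    · intro h a ha i j
      exact (h ha ((E i)ᴴ * E j) ⟨i, j, rfl⟩).symm
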